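/- arXiv:2009.10206 — 2 statements merged into one kernel-verified Lean document; each statement's English description precedes it below -/
import Mathlib

section
/- For every real α and every n ∈ ℕ, the polynomial identity x²(x − n − 1) · L_{n+1}^{(α+3)}(x) = a(x) · L_{n+1}^{(α+1)}(x) + b(x) · L_n^{(α)}(x) holds in ℝ[x], where a(x) = (x − n − 1)[(x + α + 2)(x + α + 1) − x(α + n + 3)] − x(x + α + 2)(α + n + 2) and b(x) = (α + n + 1)(α + n + 2)(x + α + 2). -/
open Polynomial

/-- The generalized Laguerre polynomial `L_n^{(α)}(x) =
∑_{k=0}^{n} (−1)^k [∏_{j=k+1}^{n}(α+j)] / ((n−k)!·k!) · x^k`. -/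
noncomputable def laguerre (α : ℝ) (n : ℕ) : Polynomial ℝ :=
  ∑ k ∈ Finset.range (n + 1),
    Polynomial.C ((-1 : ℝ) ^ k * (∏ j ∈ Finset.Icc (k + 1) n, (α + (j : ℝ))) /
      ((n - k).factorial * k.factorial)) * Polynomial.X ^ k

lemma lag_coeff (α : ℝ) (n k : ℕ) : (laguerre α n).coeff k =
    if k ≤ n then (-1 : ℝ) ^ k * (∏ j ∈ Finset.Icc (k + 1) n, (α + (j : ℝ))) /
      ((n - k).factorial * k.factorial) else 0 := by
  unfold laguerre
  rw [finset_sum_coeff]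
  simp only [coeff_C_mul, coeff_X_pow, mul_ite, mul_one, mul_zero]
  rw [Finset.sum_ite_eq (Finset.range (n+1)) k]
  simp [Nat.lt_succ_iff]

lemma prod_shift (α : ℝ) (a b : ℕ) :
    ∏ j ∈ Finset.Icc a b, (α + 1 + (j : ℝ)) = ∏ j ∈ Finset.Icc (a+1) (b+1), (α + (j : ℝ)) := by
  rw [← Finset.map_add_right_Icc a b 1, Finset.prod_map]
  apply Finset.prod_congr rfl
  intro j _
  simp only [addRightEmbedding_apply]
  push_cast
  ring

lemma prod_bot (α : ℝ) {a b : ℕ} (h : a ≤ b) :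
    ∏ j ∈ Finset.Icc a b, (α + (j : ℝ)) = (α + a) * ∏ j ∈ Finset.Icc (a+1) b, (α + (j : ℝ)) := by
  rw [Finset.Icc_add_one_left_eq_Ioc, ← Finset.Ioc_insert_left h, Finset.prod_insert (by simp)]

lemma lemB (α : ℝ) (n : ℕ) :
    laguerre (α+1) (n+1) = laguerre α (n+1) + laguerre (α+1) n := by
  ext k
  rw [coeff_add, lag_coeff, lag_coeff, lag_coeff]
  by_cases h1 : k ≤ n
  · have h2 : k ≤ n + 1 := by omega
    rw [if_pos h2, if_pos h2, if_pos h1]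
    rw [prod_shift, prod_shift]
    rw [prod_bot α (by omega : k + 1 ≤ n + 1)]
    rw [Finset.prod_Icc_succ_top (by omega : k + 1 + 1 ≤ n + 1 + 1)]
    obtain ⟨d, rfl⟩ : ∃ d, n = k + d := ⟨n - k, by omega⟩
    have e1 : k + d + 1 - k = d + 1 := by omega
    have e2 : k + d - k = d := by omega
    rw [e1, e2, Nat.factorial_succ]
    have hd : ((d+1 : ℕ) : ℝ) ≠ 0 := by positivity
    have hdf : ((d.factorial : ℝ)) ≠ 0 := by positivity
    have hkf : ((k.factorial : ℝ)) ≠ 0 := by positivity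
    push_cast
    field_simp
    ring
  · by_cases h2 : k ≤ n + 1
    · have hk : k = n + 1 := by omega
      subst hk
      rw [if_pos h2, if_pos h2, if_neg h1]
      simp
    · rw [if_neg h2, if_neg h2, if_neg h1]
      simp

lemma lemA (α : ℝ) (n : ℕ) :
    X * laguerre (α+1) (n+1) + C ((n : ℝ)+1) * laguerre α (n+1) =
    X * laguerre α (n+1) + C (α+(n : ℝ)+1) * laguerre α n := by
  ext k
  rw [coeff_add, coeff_add, coeff_C_mul, coeff_C_mul]
  match k with
  | 0 =>
    rw [mul_coeff_zero, mul_coeff_zero, coeff_X_zero, zero_mul, zero_mul,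
      lag_coeff, lag_coeff, if_pos (by omega), if_pos (by omega)]
    rw [Finset.prod_Icc_succ_top (by omega : 0 + 1 ≤ n + 1)]
    simp only [Nat.sub_zero, Nat.factorial_succ, Nat.factorial_zero]
    push_cast
    have hnf : ((n.factorial : ℝ)) ≠ 0 := by positivity
    have hn1 : ((n : ℝ) + 1) ≠ 0 := by positivity
    field_simp
    ring
  | m + 1 =>
    rw [coeff_X_mul, coeff_X_mul, lag_coeff, lag_coeff, lag_coeff, lag_coeff]
    by_cases h1 : m + 1 ≤ n
    · rw [if_pos (by omega : m ≤ n + 1), if_pos (by omega : m + 1 ≤ n + 1),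
        if_pos (by omega : m ≤ n + 1), if_pos h1]
      rw [prod_shift]
      rw [Finset.prod_Icc_succ_top (by omega : m + 1 + 1 ≤ n + 1 + 1)]
      rw [prod_bot α (by omega : m + 1 ≤ n + 1)]
      rw [Finset.prod_Icc_succ_top (by omega : m + 1 + 1 ≤ n + 1)]
      obtain ⟨d, rfl⟩ : ∃ d, n = m + 1 + d := ⟨n - (m+1), by omega⟩
      have e1 : m + 1 + d + 1 - m = d + 2 := by omega
      have e2 : m + 1 + d + 1 - (m + 1) = d + 1 := by omega
      have e3 : m + 1 + d - (m + 1) = d := by omega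
      rw [e1, e2, e3]
      have f1 : (d + 2).factorial = (d+2) * ((d+1) * d.factorial) := by
        rw [Nat.factorial_succ, Nat.factorial_succ]
      have f2 : (d + 1).factorial = (d+1) * d.factorial := Nat.factorial_succ d
      have f3 : (m + 1).factorial = (m+1) * m.factorial := Nat.factorial_succ m
      rw [f1, f2, f3]
      have h1 : ((d.factorial : ℝ)) ≠ 0 := by positivity
      have h2 : ((m.factorial : ℝ)) ≠ 0 := by positivity
      have h3 : ((d : ℝ) + 2) ≠ 0 := by positivity
      have h4 : ((d : ℝ) + 1) ≠ 0 := by positivity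
      have h5 : ((m : ℝ) + 1) ≠ 0 := by positivity
      push_cast
      field_simp
      ring
    · by_cases h2 : m ≤ n
      · have hm : m = n := by omega
        subst hm
        rw [if_pos (by omega : m ≤ m + 1), if_pos (by omega : m + 1 ≤ m + 1),
          if_pos (by omega : m ≤ m + 1), if_neg h1]
        rw [prod_shift]
        have emm : Finset.Icc (m+1) (m+1) = {m+1} := Finset.Icc_self (m+1)
        have emm2 : Finset.Icc (m+1+1) (m+1+1) = {m+1+1} := Finset.Icc_self (m+1+1)
        rw [emm, emm2]
        simp only [Finset.prod_singleton, Finset.Icc_self]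
        have e1 : m + 1 - m = 1 := by omega
        have e2 : m + 1 - (m + 1) = 0 := by omega
        rw [e1, e2, Nat.factorial_one, Nat.factorial_zero, Nat.factorial_succ]
        rw [Finset.Icc_eq_empty (by omega : ¬ (m + 1 + 1 ≤ m + 1)), Finset.prod_empty]
        have h2 : ((m.factorial : ℝ)) ≠ 0 := by positivity
        have h5 : ((m : ℝ) + 1) ≠ 0 := by positivity
        push_cast
        field_simp
        ring
      · by_cases h3 : m ≤ n + 1
        · have hm : m = n + 1 := by omega
          subst hm
          rw [if_pos le_rfl, if_pos le_rfl, if_neg (by omega), if_neg (by omega)]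
          simp
        · rw [if_neg h3, if_neg (by omega), if_neg h3, if_neg (by omega)]
          simp

theorem laguerre_mixed_recurrence_deg_succ_param_three (α : ℝ) (n : ℕ) :
    Polynomial.X ^ 2 * (Polynomial.X - Polynomial.C ((n : ℝ) + 1)) *
        laguerre (α + 3) (n + 1) =
      ((Polynomial.X - Polynomial.C ((n : ℝ) + 1)) *
            ((Polynomial.X + Polynomial.C (α + 2)) * (Polynomial.X + Polynomial.C (α + 1)) -
              Polynomial.X * Polynomial.C (α + (n : ℝ) + 3)) -
          Polynomial.X * (Polynomial.X + Polynomial.C (α + 2)) *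
            Polynomial.C (α + (n : ℝ) + 2)) * laguerre (α + 1) (n + 1) +
        Polynomial.C ((α + (n : ℝ) + 1) * (α + (n : ℝ) + 2)) *
          (Polynomial.X + Polynomial.C (α + 2)) * laguerre α n := by
  have e3 : α + 2 + 1 = α + 3 := by ring
  have e2 : α + 1 + 1 = α + 2 := by ring
  have hA2 := lemA (α+2) n
  have hA1 := lemA (α+1) n
  have hA0 := lemA α n
  have hB1 := lemB (α+1) n
  have hB0 := lemB α n
  rw [e3] at hA2
  rw [e2] at hA1 hB1
  simp only [map_add, map_mul, map_one, map_ofNat] at hA2 hA1 hA0 hB1 hB0 ⊢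
  linear_combination (norm := ring1)
    (X*(X - (C (n:ℝ) + 1))) * hA2
    + ((X - (C (n:ℝ) + 1))^2 + (C α + C (n:ℝ) + 3)*(X - (C (n:ℝ) + 1))) * hA1
    - (C α + C (n:ℝ) + 3)*(X - (C (n:ℝ) + 1))*X * hB1
    - (C α + C (n:ℝ) + 2)*(X + C α + 2)*(X - (C (n:ℝ) + 1)) * hB0
    + (C α + C (n:ℝ) + 2)*(X + C α + 2) * hA0
end

section
/- For every real α and every n ∈ ℕ, the polynomial identity x²(x + α + 1) · L_n^{(α+4)}(x) = p_3(x) · L_n^{(α+2)}(x) − b_1(x) · L_n^{(α)}(x) holds in ℝ[x], where p_3(x) = (x + α + 3)(x + α + 2)(x + α + 1) − x(x + α + 1)(α + n + 3) − x(x + α + 3)(α + n + 2) and b_1(x) = (x + α + 3)(α + n + 2)(α + n + 1). -/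
open Polynomial Finset

-- shift-top lemma (T)
lemma prodT (α : ℝ) : ∀ (n k : ℕ), k ≤ n →
    (α + (k : ℝ) + 1) * ∏ j ∈ Finset.Icc (k + 1) n, (α + 1 + (j : ℝ))
      = (α + (n : ℝ) + 1) * ∏ j ∈ Finset.Icc (k + 1) n, (α + (j : ℝ)) := by
  intro n
  induction n with
  | zero => intro k hk; interval_cases k; simp
  | succ n ih =>
    intro k hk
    rcases Nat.lt_or_ge k (n + 1) with h | h
    · have hk' : k ≤ n := Nat.lt_succ_iff.mp h
      rw [Finset.prod_Icc_succ_top (by omega : k + 1 ≤ n + 1),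
          Finset.prod_Icc_succ_top (by omega : k + 1 ≤ n + 1)]
      push_cast
      linear_combination (α + 1 + ((n : ℝ) + 1)) * ih k hk'
    · have : k = n + 1 := le_antisymm hk h
      subst this
      rw [show Finset.Icc (n + 1 + 1) (n + 1) = ∅ by simp]
      simp

-- shift lemma (A): for k < n
lemma prodA (α : ℝ) : ∀ (n k : ℕ), k < n →
    (∏ j ∈ Finset.Icc (k + 1) n, (α + 1 + (j : ℝ)))
      = (α + (n : ℝ) + 1) * ∏ j ∈ Finset.Icc (k + 2) n, (α + (j : ℝ)) := by
  intro n
  induction n with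
  | zero => intro k hk; omega
  | succ n ih =>
    intro k hk
    rcases Nat.lt_or_ge k n with h | h
    · rw [Finset.prod_Icc_succ_top (by omega : k + 1 ≤ n + 1),
          Finset.prod_Icc_succ_top (by omega : k + 2 ≤ n + 1)]
      push_cast
      linear_combination (α + 1 + ((n : ℝ) + 1)) * ih k h
    · have : k = n := by omega
      subst this
      rw [show Finset.Icc (k + 2) (k + 1) = ∅ by simp]
      simp
      ring


lemma laguerre_coeff (α : ℝ) (n m : ℕ) :
    (laguerre α n).coeff m =
      if m ≤ n then
        (-1 : ℝ) ^ m * (∏ j ∈ Finset.Icc (m + 1) n, (α + (j : ℝ))) /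
          ((n - m).factorial * m.factorial)
      else 0 := by
  unfold laguerre
  rw [Polynomial.finset_sum_coeff]
  simp only [Polynomial.coeff_C_mul, Polynomial.coeff_X_pow, mul_ite, mul_one, mul_zero]
  rw [Finset.sum_ite_eq (Finset.range (n + 1)) m]
  simp [Nat.lt_succ_iff]

lemma step (α : ℝ) (n : ℕ) :
    Polynomial.X * laguerre (α + 2) n + Polynomial.C (α + (n : ℝ) + 1) * laguerre α n
      = (Polynomial.X + Polynomial.C (α + 1)) * laguerre (α + 1) n := by
  ext m
  rcases m with _ | k
  · simp only [Polynomial.coeff_add, Polynomial.mul_coeff_zero, Polynomial.coeff_X_zero,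
      zero_mul, zero_add, Polynomial.coeff_C_mul, add_mul, Polynomial.coeff_C_zero,
      Polynomial.coeff_add, laguerre_coeff]
    simp only [if_pos (Nat.zero_le n), pow_zero, one_mul, Nat.sub_zero,
      Nat.factorial_zero, Nat.cast_one, mul_one]
    have h := prodT α n 0 (Nat.zero_le n)
    simp only [Nat.cast_zero, add_zero] at h
    have hne : ((n.factorial : ℝ)) ≠ 0 := by positivity
    field_simp
    linear_combination -h
  · simp only [Polynomial.coeff_add, Polynomial.coeff_X_mul, Polynomial.coeff_C_mul,
      add_mul, Polynomial.coeff_add, laguerre_coeff]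
    rcases Nat.lt_or_ge n (k + 1) with h | h
    · rcases Nat.lt_or_ge n k with h' | h'
      · have c1 : ¬ k ≤ n := by omega
        have c2 : ¬ k + 1 ≤ n := by omega
        simp [c1, c2]
      · have hk : k = n := by omega
        subst hk
        rw [if_pos le_rfl, if_neg (by omega), if_pos le_rfl,
          Finset.Icc_eq_empty (by omega : ¬ k + 1 ≤ k)]
        simp
    · -- main case : k + 1 ≤ n
      have hk : k ≤ n := by omega
      rw [if_pos hk, if_pos h, if_pos hk, if_pos h]
      have e2 : ∏ j ∈ Finset.Icc (k + 1) n, (α + 2 + (j : ℝ))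
          = ∏ j ∈ Finset.Icc (k + 1) n, (α + 1 + 1 + (j : ℝ)) :=
        Finset.prod_congr rfl (by intro j _; ring)
      rw [e2, show k + 1 + 1 = k + 2 from rfl]
      have hA1 := prodA α n k (by omega)
      have hA2 := prodA (α + 1) n k (by omega)
      have hT := prodT α n (k + 1) h
      rw [show (k + 1) + 1 = k + 2 from rfl] at hT
      push_cast at hT
      rw [hA1, hA2]
      have f1 : ((n - k).factorial : ℝ) = ((n : ℝ) - k) * ((n - (k + 1)).factorial) := by
        rw [show n - k = (n - (k + 1)) + 1 by omega, Nat.factorial_succ]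
        rw [Nat.cast_mul]
        congr 1
        push_cast [Nat.cast_sub h]
        ring
      have f2 : (((k + 1)).factorial : ℝ) = ((k : ℝ) + 1) * k.factorial := by
        rw [Nat.factorial_succ]; push_cast; ring
      rw [f1, f2]
      have hF1 : (((n - (k + 1)).factorial : ℝ)) ≠ 0 := by positivity
      have hF2 : ((k.factorial : ℝ)) ≠ 0 := by positivity
      have hnk : ((n : ℝ) - k) ≠ 0 := by
        have : (k : ℝ) < n := by exact_mod_cast Nat.lt_of_succ_le h
        linarith
      have hk1 : ((k : ℝ) + 1) ≠ 0 := by positivity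
      field_simp
      linear_combination ((-1 : ℝ) ^ k * ((n : ℝ) + 1)) * hT

theorem laguerre_mixed_recurrence_equal_deg_param_four (α : ℝ) (n : ℕ) :
    Polynomial.X ^ 2 * (Polynomial.X + Polynomial.C (α + 1)) * laguerre (α + 4) n =
      ((Polynomial.X + Polynomial.C (α + 3)) * (Polynomial.X + Polynomial.C (α + 2)) *
            (Polynomial.X + Polynomial.C (α + 1)) -
          Polynomial.X * (Polynomial.X + Polynomial.C (α + 1)) *
            Polynomial.C (α + (n : ℝ) + 3) -
          Polynomial.X * (Polynomial.X + Polynomial.C (α + 3)) *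
            Polynomial.C (α + (n : ℝ) + 2)) * laguerre (α + 2) n -
        (Polynomial.X + Polynomial.C (α + 3)) *
          Polynomial.C ((α + (n : ℝ) + 2) * (α + (n : ℝ) + 1)) * laguerre α n := by
  have h0 := step α n
  have h1 := step (α + 1) n
  have h2 := step (α + 2) n
  rw [show α + 1 + 2 = α + 3 by ring, show α + 1 + 1 = α + 2 by ring,
    show α + 1 + (n : ℝ) + 1 = α + (n : ℝ) + 2 by ring] at h1
  rw [show α + 2 + 2 = α + 4 by ring, show α + 2 + 1 = α + 3 by ring,
    show α + 2 + (n : ℝ) + 1 = α + (n : ℝ) + 3 by ring] at h2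
  rw [map_mul]
  linear_combination (Polynomial.X * (Polynomial.X + Polynomial.C (α + 1))) * h2 +
    ((Polynomial.X + Polynomial.C (α + 1)) * (Polynomial.X + Polynomial.C (α + 3))) * h1 +
    ((Polynomial.X + Polynomial.C (α + 3)) * Polynomial.C (α + (n : ℝ) + 2)) * h0
end
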